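/- arXiv:2303.16413 — 2 statements merged into one kernel-verified Lean document; each statement's English description precedes it below -/
import Mathlib

section
/- Let B be an ordered branching program of length n and width w and let G : {0,1}^s → {0,1}^n be any function. Then for every i < n: ∑_{v∈V_{i+1}} |E[B_{→v}] − E_G[B_{→v}]| ≤ ∑_{v∈V_i} |E[B_{→v}] − E_G[B_{→v}]| + ∑_{v∈V_i} |E_G[N_v]|. -/
open Finset
open scoped Classical

/-- An ordered branching program of length `n` and width `w`: each layer's states
are identified with `Fin w`; `next i v b` is the successor of state `v` in layer `i`
on bit `b`; states in the last layer are labeled by `label`. -/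
structure OBP (n w : ℕ) where
  start : Fin w
  next : ℕ → Fin w → Bool → Fin w
  label : Fin w → Bool

namespace OBP

/-- The state reached from state `v` in layer `i` after reading `k` bits. -/
def walk {n w : ℕ} (B : OBP n w) : (k : ℕ) → (i : ℕ) → Fin w → (Fin k → Bool) → Fin w
  | 0, _, v, _ => v
  | k + 1, i, v, x => walk B k (i + 1) (B.next i v (x 0)) (fun j => x j.succ)

/-- The state in layer `i` reached from the start state on a length-`i` input. -/
def reach {n w : ℕ} (B : OBP n w) {i : ℕ} (x : Fin i → Bool) : Fin w :=
  B.walk i 0 B.start x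

/-- The boolean output of the program on an `n`-bit input. -/
def eval {n w : ℕ} (B : OBP n w) (x : Fin n → Bool) : Bool :=
  B.label (B.reach x)

end OBP

/-- Expectation of a real-valued function under the uniform distribution. -/
noncomputable def Exp {α : Type*} [Fintype α] (f : α → ℝ) : ℝ :=
  (∑ a, f a) / (Fintype.card α : ℝ)

/-- Probability of an event under the uniform distribution. -/
noncomputable def prob {α : Type*} [Fintype α] (p : α → Prop) : ℝ :=
  ((Finset.univ.filter p).card : ℝ) / (Fintype.card α : ℝ)

/-- A boolean viewed as a real number. -/
def bval (b : Bool) : ℝ := if b then 1 else 0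

/-- The first `k` bits of `x` (padded with `false` if `k > n`). -/
def bits {n : ℕ} (x : Fin n → Bool) (k : ℕ) : Fin k → Bool :=
  fun j => if h : (j : ℕ) < n then x ⟨j, h⟩ else false

/-- The pseudo-expectation `E_G[f]` of `f : {0,1}^i → ℝ` under the generator `G`,
where `f` is fed the length-`i` prefix of the output of `G`. -/
noncomputable def ExpG {s n : ℕ} (G : (Fin s → Bool) → Fin n → Bool) (i : ℕ)
    (f : (Fin i → Bool) → ℝ) : ℝ :=
  Exp (fun y => f (bits (G y) i))

/-- The indicator `B_{→v}` of reaching state `v` in layer `i`. -/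
def reachInd {n w : ℕ} (B : OBP n w) {i : ℕ} (v : Fin w) (x : Fin i → Bool) : ℝ :=
  if B.reach x = v then 1 else 0

/-- The next-bit bias function `N_v` for a state `v` in layer `i`. -/
def Nv {n w : ℕ} (B : OBP n w) {i : ℕ} (v : Fin w) (x : Fin (i + 1) → Bool) : ℝ :=
  if B.reach (fun j : Fin i => x j.castSucc) = v then
    (if x (Fin.last i) then 1 else -1)
  else 0

lemma walk_succ_last {n w : ℕ} (B : OBP n w) :
    ∀ (k i : ℕ) (v : Fin w) (x : Fin (k + 1) → Bool),
      B.walk (k + 1) i v x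
        = B.next (i + k) (B.walk k i v (fun j => x j.castSucc)) (x (Fin.last k)) := by
  intro k
  induction k with
  | zero =>
    intro i v x
    simp [OBP.walk]
  | succ k ih =>
    intro i v x
    show B.walk (k + 1) (i + 1) (B.next i v (x 0)) (fun j => x j.succ)
        = B.next (i + (k + 1))
            (B.walk k (i + 1) (B.next i v ((fun j : Fin (k+1) => x j.castSucc) 0))
              (fun j => x j.succ.castSucc)) (x (Fin.last (k + 1)))
    rw [ih]
    have hnat : i + 1 + k = i + (k + 1) := by omega
    rw [hnat, Fin.succ_last]
    congr 2

lemma reach_snoc {n w : ℕ} (B : OBP n w) {i : ℕ} (x : Fin (i + 1) → Bool) :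
    B.reach x = B.next i (B.reach (fun j => x j.castSucc)) (x (Fin.last i)) := by
  have := walk_succ_last B i 0 B.start x
  simpa [OBP.reach] using this

/-- auxiliary: joint indicator of (state at layer i, next bit) -/
noncomputable def gf {n w : ℕ} (B : OBP n w) (i : ℕ) (v : Fin w) (b : Bool)
    (x : Fin (i + 1) → Bool) : ℝ :=
  (if B.reach (fun j : Fin i => x j.castSucc) = v then 1 else 0) *
  (if x (Fin.last i) = b then 1 else 0)

lemma Exp_sum' {α ι : Type*} [Fintype α] (s : Finset ι) (f : ι → α → ℝ) :
    Exp (fun a => ∑ j ∈ s, f j a) = ∑ j ∈ s, Exp (f j) := by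
  unfold Exp
  rw [Finset.sum_comm, Finset.sum_div]

lemma Exp_const_mul {α : Type*} [Fintype α] (c : ℝ) (f : α → ℝ) :
    Exp (fun a => c * f a) = c * Exp f := by
  unfold Exp
  rw [← Finset.mul_sum, mul_div_assoc]

lemma Exp_sub {α : Type*} [Fintype α] (f g : α → ℝ) :
    Exp (fun a => f a - g a) = Exp f - Exp g := by
  unfold Exp
  rw [Finset.sum_sub_distrib, sub_div]

lemma Exp_add {α : Type*} [Fintype α] (f g : α → ℝ) :
    Exp (fun a => f a + g a) = Exp f + Exp g := by
  unfold Exp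
  rw [Finset.sum_add_distrib, add_div]

lemma Exp_snoc {i : ℕ} (f : (Fin (i + 1) → Bool) → ℝ) :
    Exp f = (∑ b : Bool, Exp (fun x : Fin i → Bool => f (Fin.snoc x b))) / 2 := by
  have hs : ∑ x : Fin (i + 1) → Bool, f x
      = ∑ p : Bool × (Fin i → Bool), f (Fin.snoc p.2 p.1) := by
    rw [← Equiv.sum_comp (Fin.snocEquiv (fun _ => Bool)) f]
    rfl
  have hc : (Fintype.card (Fin (i + 1) → Bool) : ℝ)
      = (Fintype.card (Fin i → Bool) : ℝ) * 2 := by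
    simp [pow_succ]
  unfold Exp
  rw [hs, Fintype.sum_prod_type, hc, ← Finset.sum_div, Finset.sum_comm, div_div]

lemma bits_castSucc {n : ℕ} (x : Fin n → Bool) (i : ℕ) :
    (fun j : Fin i => bits x (i + 1) j.castSucc) = bits x i := by
  funext j
  simp [bits]

lemma Nv_eq {n w : ℕ} (B : OBP n w) {i : ℕ} (v : Fin w) (x : Fin (i + 1) → Bool) :
    Nv B v x = gf B i v true x - gf B i v false x := by
  cases hb : x (Fin.last i) <;> simp [Nv, gf, hb] <;> split_ifs <;> ring

lemma reachInd_split {n w : ℕ} (B : OBP n w) {i : ℕ} (v : Fin w) (x : Fin (i + 1) → Bool) :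
    reachInd B v (fun j : Fin i => x j.castSucc) = gf B i v false x + gf B i v true x := by
  cases hb : x (Fin.last i) <;> simp [reachInd, gf, hb]

lemma reachInd_decomp {n w : ℕ} (B : OBP n w) {i : ℕ} (u : Fin w) (x : Fin (i + 1) → Bool) :
    reachInd B u x = ∑ v : Fin w, ∑ b : Bool,
      (if B.next i v b = u then (1 : ℝ) else 0) * gf B i v b x := by
  have hsum : ∀ v : Fin w,
      (∑ b : Bool, (if B.next i v b = u then (1 : ℝ) else 0) * gf B i v b x)
        = (if B.reach (fun j : Fin i => x j.castSucc) = v then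
            (if B.next i v (x (Fin.last i)) = u then (1 : ℝ) else 0) else 0) := by
    intro v
    cases hb : x (Fin.last i) <;>
      simp [Fintype.sum_bool, gf, hb] <;> split_ifs <;> ring
  rw [Finset.sum_congr rfl (fun v _ => hsum v),
    Finset.sum_ite_eq Finset.univ (B.reach (fun j : Fin i => x j.castSucc))]
  simp [reachInd, reach_snoc]

lemma gf_snoc {n w : ℕ} (B : OBP n w) {i : ℕ} (v : Fin w) (b c : Bool)
    (x : Fin i → Bool) :
    gf B i v b (Fin.snoc x c) = reachInd B v x * (if c = b then 1 else 0) := by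
  have h : (fun j : Fin i => (Fin.snoc x c : Fin (i+1) → Bool) j.castSucc) = x := by
    funext j; simp
  simp [gf, reachInd, h]

lemma Exp_gf {n w : ℕ} (B : OBP n w) {i : ℕ} (v : Fin w) (b : Bool) :
    Exp (gf B i v b) = Exp (fun x : Fin i → Bool => reachInd B v x) / 2 := by
  rw [Exp_snoc]
  congr 1
  have : ∀ c : Bool, Exp (fun x : Fin i → Bool => gf B i v b (Fin.snoc x c))
      = Exp (fun x : Fin i → Bool => reachInd B v x * (if c = b then 1 else 0)) := by
    intro c; congr 1; funext x; rw [gf_snoc]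
  rw [Fintype.sum_bool, this true, this false]
  cases b <;> simp [Exp]


theorem stmt1 {n w s : ℕ} (B : OBP n w) (G : (Fin s → Bool) → Fin n → Bool)
    (i : ℕ) (hi : i < n) :
    ∑ v : Fin w,
        |Exp (fun x : Fin (i + 1) → Bool => reachInd B v x) - ExpG G (i + 1) (reachInd B v)| ≤
      (∑ v : Fin w,
        |Exp (fun x : Fin i → Bool => reachInd B v x) - ExpG G i (reachInd B v)|) +
      ∑ v : Fin w, |ExpG G (i + 1) (Nv B v)| := by
  -- abbreviations
  have hQsplit : ∀ v : Fin w, ExpG G i (reachInd B v)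
      = ExpG G (i + 1) (gf B i v false) + ExpG G (i + 1) (gf B i v true) := by
    intro v
    unfold ExpG
    rw [← Exp_add]
    congr 1
    funext y
    rw [← bits_castSucc (G y) i, reachInd_split]
  have hNv : ∀ v : Fin w, ExpG G (i + 1) (Nv B v)
      = ExpG G (i + 1) (gf B i v true) - ExpG G (i + 1) (gf B i v false) := by
    intro v
    unfold ExpG
    rw [← Exp_sub]
    congr 1
    funext y
    rw [Nv_eq]
  have hDiff : ∀ u : Fin w,
      Exp (fun x : Fin (i + 1) → Bool => reachInd B u x) - ExpG G (i + 1) (reachInd B u)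
        = ∑ v : Fin w, ∑ b : Bool, (if B.next i v b = u then (1 : ℝ) else 0) *
            (Exp (fun x : Fin i → Bool => reachInd B v x) / 2 - ExpG G (i + 1) (gf B i v b)) := by
    intro u
    have hE : Exp (fun x : Fin (i + 1) → Bool => reachInd B u x)
        = ∑ v : Fin w, ∑ b : Bool,
            (if B.next i v b = u then (1 : ℝ) else 0) * Exp (gf B i v b) := by
      rw [show (fun x : Fin (i + 1) → Bool => reachInd B u x)
          = (fun x => ∑ v : Fin w, ∑ b : Bool,
              (if B.next i v b = u then (1 : ℝ) else 0) * gf B i v b x) from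
        funext (reachInd_decomp B u)]
      rw [Exp_sum']
      exact Finset.sum_congr rfl fun v _ => by
        rw [Exp_sum']
        exact Finset.sum_congr rfl fun b _ => Exp_const_mul _ _
    have hG : ExpG G (i + 1) (reachInd B u)
        = ∑ v : Fin w, ∑ b : Bool,
            (if B.next i v b = u then (1 : ℝ) else 0) * ExpG G (i + 1) (gf B i v b) := by
      unfold ExpG
      rw [show (fun y => reachInd B u (bits (G y) (i + 1)))
          = (fun y => ∑ v : Fin w, ∑ b : Bool,
              (if B.next i v b = u then (1 : ℝ) else 0) * gf B i v b (bits (G y) (i + 1))) from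
        funext fun y => reachInd_decomp B u _]
      rw [Exp_sum']
      exact Finset.sum_congr rfl fun v _ => by
        rw [Exp_sum']
        exact Finset.sum_congr rfl fun b _ => Exp_const_mul _ _
    rw [hE, hG, ← Finset.sum_sub_distrib]
    refine Finset.sum_congr rfl fun v _ => ?_
    rw [← Finset.sum_sub_distrib]
    refine Finset.sum_congr rfl fun b _ => ?_
    rw [Exp_gf, ← mul_sub]
  -- abbreviate the inner difference
  set D : Fin w → Bool → ℝ := fun v b =>
    Exp (fun x : Fin i → Bool => reachInd B v x) / 2 - ExpG G (i + 1) (gf B i v b) with hD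
  have step1 : ∑ u : Fin w,
      |Exp (fun x : Fin (i + 1) → Bool => reachInd B u x) - ExpG G (i + 1) (reachInd B u)|
      ≤ ∑ v : Fin w, ∑ b : Bool, |D v b| := by
    have h1 : ∀ u : Fin w,
        |Exp (fun x : Fin (i + 1) → Bool => reachInd B u x) - ExpG G (i + 1) (reachInd B u)|
          ≤ ∑ v : Fin w, ∑ b : Bool, (if B.next i v b = u then (1 : ℝ) else 0) * |D v b| := by
      intro u
      rw [hDiff u]
      refine (Finset.abs_sum_le_sum_abs _ _).trans (Finset.sum_le_sum fun v _ => ?_)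
      refine (Finset.abs_sum_le_sum_abs _ _).trans (Finset.sum_le_sum fun b _ => ?_)
      split_ifs <;> simp [hD]
    refine (Finset.sum_le_sum fun u _ => h1 u).trans ?_
    rw [Finset.sum_comm]
    refine le_of_eq (Finset.sum_congr rfl fun v _ => ?_)
    rw [Finset.sum_comm]
    refine Finset.sum_congr rfl fun b _ => ?_
    simp [ite_mul]
  have key : ∀ p q0 q1 : ℝ, |p / 2 - q0| + |p / 2 - q1| ≤ |p - (q0 + q1)| + |q1 - q0| := by
    intro p q0 q1
    have h1 : p / 2 - q0 = (p - (q0 + q1)) / 2 + (q1 - q0) / 2 := by ring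
    have h2 : p / 2 - q1 = (p - (q0 + q1)) / 2 - (q1 - q0) / 2 := by ring
    have hA : |(p - (q0 + q1)) / 2| = |p - (q0 + q1)| / 2 := by rw [abs_div]; norm_num
    have hB : |(q1 - q0) / 2| = |q1 - q0| / 2 := by rw [abs_div]; norm_num
    have h3 := abs_add_le ((p - (q0 + q1)) / 2) ((q1 - q0) / 2)
    have h4 := abs_sub ((p - (q0 + q1)) / 2) ((q1 - q0) / 2)
    rw [hA, hB] at h3 h4
    rw [h1, h2]
    linarith
  refine step1.trans ?_
  rw [← Finset.sum_add_distrib]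
  refine Finset.sum_le_sum fun v _ => ?_
  rw [Fintype.sum_bool, hQsplit v, hNv v]
  have := key (Exp (fun x : Fin i → Bool => reachInd B v x))
    (ExpG G (i + 1) (gf B i v false)) (ExpG G (i + 1) (gf B i v true))
  simp only [hD]
  linarith
end

section
/- Let B be an ordered branching program of length n and width w, and let H : {0,1}^s → {0,1}^n be an ε-hitting set generator for the class of all ordered branching programs of length n and width at most w². Suppose the real numbers p̃_{x,i} (x ∈ {0,1}^s, 0 ≤ i ≤ n) satisfy |p̃_{x,i} − p_{x,i}| ≤ 2ε for all x and all i < n, and p̃_{x,n} = B(H(x)) for all x. Then all the local consistency tests pass, namely: (1) for every x ∈ {0,1}^s, i < n, and x_0, x_1 ∈ {0,1}^s with B[v_i(x),0] ∼ v_{i+1}(x_0) and B[v_i(x),1] ∼ v_{i+1}(x_1), |p̃_{x,i} − (p̃_{x_0,i+1} + p̃_{x_1,i+1})/2| ≤ 5ε; (2) for every x, x′ ∈ {0,1}^s and i ≤ n with v_i(x) ∼ v_i(x′), |p̃_{x,i} − p̃_{x′,i}| ≤ 5ε; (3) p̃_{x,n} = B(H(x)) for every x ∈ {0,1}^s. 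-/
open Finset
open scoped Classical

/-- `p_{v→}`: the probability of acceptance starting from state `v` in layer `i`,
over a uniformly random suffix of length `n - i`. -/
noncomputable def pAcc {n w : ℕ} (B : OBP n w) (i : ℕ) (v : Fin w) : ℝ :=
  prob (fun r : Fin (n - i) → Bool => B.label (B.walk (n - i) i v r) = true)

/-- `H` is an `ε`-hitting set generator for all OBPs of length `n` and width `W`. -/
noncomputable def IsHSG (n W s : ℕ) (H : (Fin s → Bool) → Fin n → Bool) (ε : ℝ) : Prop :=
  ∀ B' : OBP n W, ε ≤ Exp (fun x : Fin n → Bool => bval (B'.eval x)) →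
    ∃ y : Fin s → Bool, B'.eval (H y) = true

/-- States `u` and `u'` in layer `i` are indistinguishable under `H`:
they behave identically on the length-`(n-i)` prefix of every output of `H`. -/
def Indist {n w s : ℕ} (B : OBP n w) (H : (Fin s → Bool) → Fin n → Bool)
    (i : ℕ) (u u' : Fin w) : Prop :=
  ∀ y : Fin s → Bool,
    B.walk (n - i) i u (bits (H y) (n - i)) = B.walk (n - i) i u' (bits (H y) (n - i))

/-- `v_i(x)`: the state in layer `i` reached from the start
on the length-`i` prefix of `H x`. -/
def vAt {n w s : ℕ} (B : OBP n w) (H : (Fin s → Bool) → Fin n → Bool)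
    (i : ℕ) (x : Fin s → Bool) : Fin w :=
  B.reach (bits (H x) i)

/-- A state `v` in layer `i < n` is unverified if one of its successors is not
reached (in layer `i+1`) by any output of `H`. -/
def Unverified {n w s : ℕ} (B : OBP n w) (H : (Fin s → Bool) → Fin n → Bool)
    (i : ℕ) (v : Fin w) : Prop :=
  i < n ∧ ∃ b : Bool, ∀ x' : Fin s → Bool, B.next i v b ≠ vAt B H (i + 1) x'

section Helpers

namespace OBP
variable {n w : ℕ}

def walkL (B : OBP n w) : ℕ → Fin w → List Bool → Fin w
  | _, v, [] => v
  | i, v, b :: l => walkL B (i + 1) (B.next i v b) l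

lemma walkL_append (B : OBP n w) (l1 l2 : List Bool) : ∀ (i : ℕ) (v : Fin w),
    B.walkL i v (l1 ++ l2) = B.walkL (i + l1.length) (B.walkL i v l1) l2 := by
  induction l1 with
  | nil => intro i v; simp [walkL]
  | cons b l ih =>
      intro i v
      show B.walkL (i + 1) (B.next i v b) (l ++ l2) = _
      rw [ih]
      have h : i + (b :: l).length = (i + 1) + l.length := by simp; omega
      rw [h]
      rfl

lemma walk_eq_walkL (B : OBP n w) : ∀ (k i : ℕ) (v : Fin w) (x : Fin k → Bool),
    B.walk k i v x = B.walkL i v (List.ofFn x) := by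
  intro k
  induction k with
  | zero => intro i v x; simp [walk, walkL, List.ofFn_zero]
  | succ k ih =>
      intro i v x
      show B.walk k (i + 1) (B.next i v (x 0)) (fun j => x j.succ) = _
      rw [List.ofFn_succ]
      exact ih (i + 1) _ _

end OBP

lemma prob_congr {α : Type*} [Fintype α] {p q : α → Prop} (h : ∀ a, p a ↔ q a) :
    prob p = prob q := by
  have h2 : (Finset.univ.filter p) = (Finset.univ.filter q) := by
    ext a; simp [h a]
  unfold prob
  rw [h2]

lemma exp_bval_eq_prob {α : Type*} [Fintype α] (f : α → Bool) :
    Exp (fun a => bval (f a)) = prob (fun a => f a = true) := by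
  unfold Exp prob
  congr 1
  rw [Finset.card_filter]
  push_cast
  apply Finset.sum_congr rfl
  intro a _
  simp [bval]

lemma prob_equiv {α β : Type*} [Fintype α] [Fintype β] (e : α ≃ β) (p : β → Prop) :
    prob (fun a => p (e a)) = prob p := by
  unfold prob
  rw [Fintype.card_congr e]
  congr 2
  apply Finset.card_bij (fun a _ => e a)
  · intro a ha
    simp only [Finset.mem_filter, Finset.mem_univ, true_and] at *
    exact ha
  · intro a _ a' _ hreq; exact e.injective hreq
  · intro b hb
    refine ⟨e.symm b, ?_, by simp⟩
    simp only [Finset.mem_filter, Finset.mem_univ, true_and] at *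
    simpa using hb

lemma prob_fst {α β : Type*} [Fintype α] [Fintype β] [Nonempty β] (p : α → Prop) :
    prob (fun q : α × β => p q.1) = prob p := by
  unfold prob
  have h1 : (Finset.univ.filter (fun q : α × β => p q.1))
      = (Finset.univ.filter p) ×ˢ (Finset.univ : Finset β) := by
    ext q; simp
  rw [h1, Finset.card_product, Finset.card_univ, Fintype.card_prod]
  have hb : ((Fintype.card β : ℝ)) ≠ 0 := Nat.cast_ne_zero.2 Fintype.card_ne_zero
  push_cast
  rw [mul_div_mul_right _ _ hb]

lemma prob_bool {β : Type*} [Fintype β] (S : Bool × β → Prop) :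
    prob S = (prob (fun y => S (false, y)) + prob (fun y => S (true, y))) / 2 := by
  unfold prob
  rw [Fintype.card_prod, Fintype.card_bool]
  have h : (Finset.univ.filter S).card
      = (Finset.univ.filter (fun y => S (false, y))).card
        + (Finset.univ.filter (fun y => S (true, y))).card := by
    rw [Finset.card_filter, Finset.card_filter, Finset.card_filter,
      ← Finset.univ_product_univ, Finset.sum_product, Fintype.sum_bool]
    ring
  rw [h]
  push_cast
  rw [← add_div, div_div, mul_comm]

lemma prob_diff {α : Type*} [Fintype α] (P Q : α → Prop) :
    prob P - prob Q ≤ prob (fun a => P a ∧ ¬ Q a) := by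
  have hN : (Finset.univ.filter P).card
      ≤ (Finset.univ.filter (fun a => P a ∧ ¬ Q a)).card + (Finset.univ.filter Q).card := by
    calc (Finset.univ.filter P).card
        ≤ ((Finset.univ.filter (fun a => P a ∧ ¬ Q a)) ∪ (Finset.univ.filter Q)).card := by
          apply Finset.card_le_card
          intro a ha
          simp only [Finset.mem_filter, Finset.mem_union, Finset.mem_univ, true_and] at *
          tauto
      _ ≤ _ := Finset.card_union_le _ _
  have hR : ((Finset.univ.filter P).card : ℝ)
      ≤ ((Finset.univ.filter (fun a => P a ∧ ¬ Q a)).card : ℝ) + (Finset.univ.filter Q).card := by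
    exact_mod_cast hN
  unfold prob
  rcases eq_or_ne (Fintype.card α) 0 with h0 | h0
  · simp [h0]
  · have hc : (0:ℝ) < (Fintype.card α : ℝ) := by exact_mod_cast Nat.pos_of_ne_zero h0
    rw [div_sub_div_same]
    gcongr
    rw [sub_le_iff_le_add]
    have hN' : (Finset.univ.filter P).card
        ≤ (Finset.univ.filter (fun a => P a ∧ ¬ Q a)).card + (Finset.univ.filter Q).card := hN
    norm_cast
    convert hN' using 4

lemma prob_bits {m N : ℕ} (hm : m ≤ N) (R : (Fin m → Bool) → Prop) :
    prob (fun x : Fin N → Bool => R (bits x m)) = prob R := by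
  have hsum : m + (N - m) = N := Nat.add_sub_cancel' hm
  let e1 : Fin N ≃ (Fin m ⊕ Fin (N - m)) := (finCongr hsum.symm).trans finSumFinEquiv.symm
  let e : (Fin N → Bool) ≃ ((Fin m → Bool) × (Fin (N - m) → Bool)) :=
    (e1.arrowCongr (Equiv.refl Bool)).trans (Equiv.sumArrowEquivProdArrow _ _ _)
  have key : ∀ q : (Fin m → Bool) × (Fin (N - m) → Bool), bits (e.symm q) m = q.1 := by
    intro q
    funext j
    have hj : (j : ℕ) < N := lt_of_lt_of_le j.isLt hm
    have h2 : e1 ⟨(j : ℕ), hj⟩ = Sum.inl j := by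
      have h3 : (finCongr hsum.symm) ⟨(j : ℕ), hj⟩ = Fin.castAdd (N - m) j := by
        apply Fin.ext; simp
      simp only [e1, Equiv.trans_apply, h3, finSumFinEquiv_symm_apply_castAdd]
    simp only [bits, dif_pos hj]
    show e.symm q ⟨(j : ℕ), hj⟩ = q.1 j
    simp only [e, Equiv.symm_trans_apply, Equiv.arrowCongr_symm, Equiv.refl_symm,
      Equiv.sumArrowEquivProdArrow, Equiv.coe_fn_symm_mk, Equiv.arrowCongr_apply,
      Function.comp_apply, Equiv.refl_apply, Equiv.symm_symm]
    rw [h2]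
    rfl
  calc prob (fun x : Fin N → Bool => R (bits x m))
      = prob (fun q : (Fin m → Bool) × (Fin (N - m) → Bool) => R (bits (e.symm q) m)) :=
        (prob_equiv e.symm _).symm
    _ = prob (fun q : (Fin m → Bool) × (Fin (N - m) → Bool) => R q.1) :=
        prob_congr (fun q => by rw [key q])
    _ = prob R := prob_fst R

lemma pAcc_eq_of {n w : ℕ} (B : OBP n w) {i k : ℕ} (h : n - i = k) (v : Fin w) :
    pAcc B i v = prob (fun r : Fin k → Bool => B.label (B.walk k i v r) = true) := by
  subst h; rfl

lemma pAcc_succ {n w : ℕ} (B : OBP n w) {i : ℕ} (hi : i < n) (v : Fin w) :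
    pAcc B i v = (pAcc B (i + 1) (B.next i v false) + pAcc B (i + 1) (B.next i v true)) / 2 := by
  set k := n - (i + 1) with hk
  have h1 : n - i = k + 1 := by omega
  rw [pAcc_eq_of B h1 v]
  let e : (Bool × (Fin k → Bool)) ≃ (Fin (k + 1) → Bool) := Fin.consEquiv (fun _ => Bool)
  rw [← prob_equiv e (fun r : Fin (k + 1) → Bool => B.label (B.walk (k + 1) i v r) = true)]
  rw [prob_bool]
  have hcons : ∀ (b : Bool) (g : Fin k → Bool),
      B.walk (k + 1) i v (e (b, g)) = B.walk k (i + 1) (B.next i v b) g := by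
    intro b g
    show B.walk k (i + 1) (B.next i v ((Fin.cons b g : Fin (k+1) → Bool) 0))
        (fun j => (Fin.cons b g : Fin (k+1) → Bool) j.succ) = _
    have hz : (Fin.cons b g : Fin (k+1) → Bool) 0 = b := Fin.cons_zero _ _
    have hs : (fun j => (Fin.cons b g : Fin (k+1) → Bool) j.succ) = g := by
      funext j; exact Fin.cons_succ _ _ _
    rw [hz, hs]
  have hhalf : ∀ b : Bool,
      prob (fun g : Fin k → Bool => B.label (B.walk (k + 1) i v (e (b, g))) = true)
        = pAcc B (i + 1) (B.next i v b) := by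
    intro b
    rw [pAcc_eq_of B hk.symm]
    exact prob_congr (fun g => by rw [hcons])
  rw [hhalf false, hhalf true]

lemma pAcc_last {n w : ℕ} (B : OBP n w) (v : Fin w) :
    pAcc B n v = bval (B.label v) := by
  rw [pAcc_eq_of B (Nat.sub_self n) v]
  have : ∀ r : Fin 0 → Bool, B.walk 0 n v r = v := fun _ => rfl
  unfold prob
  cases hb : B.label v <;>
    simp [this, hb, bval, Fintype.card_fun]

lemma bits_self {N : ℕ} (x : Fin N → Bool) : bits x N = x := by
  funext j
  simp [bits, j.isLt]

def encE (w : ℕ) : (Fin w × Fin w) ≃ Fin (w ^ 2) :=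
  finProdFinEquiv.trans (finCongr (pow_two w).symm)

def DistOBP {n w : ℕ} (B : OBP n w) (i : ℕ) (u u' : Fin w) : OBP n (w ^ 2) where
  start := encE w (u, u')
  next := fun j p b =>
    if j < n - i then
      encE w (B.next (i + j) ((encE w).symm p).1 b, B.next (i + j) ((encE w).symm p).2 b)
    else p
  label := fun p => B.label ((encE w).symm p).1 && !B.label ((encE w).symm p).2

lemma Dist_walkL_sim {n w : ℕ} (B : OBP n w) (i : ℕ) (u u' : Fin w) :
    ∀ (l : List Bool) (j : ℕ) (a b : Fin w), j + l.length ≤ n - i →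
      (DistOBP B i u u').walkL j (encE w (a, b)) l
        = encE w (B.walkL (i + j) a l, B.walkL (i + j) b l) := by
  intro l
  induction l with
  | nil => intro j a b _; rfl
  | cons c l ih =>
      intro j a b h
      show (DistOBP B i u u').walkL (j + 1) ((DistOBP B i u u').next j (encE w (a, b)) c) l = _
      have hj : j < n - i := by simp at h; omega
      have hstep : (DistOBP B i u u').next j (encE w (a, b)) c
          = encE w (B.next (i + j) a c, B.next (i + j) b c) := by
        simp [DistOBP, hj]
      rw [hstep, ih (j + 1) _ _ (by simp at h ⊢; omega)]
      rfl

lemma Dist_walkL_stay {n w : ℕ} (B : OBP n w) (i : ℕ) (u u' : Fin w) :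
    ∀ (l : List Bool) (j : ℕ) (p : Fin (w ^ 2)), n - i ≤ j →
      (DistOBP B i u u').walkL j p l = p := by
  intro l
  induction l with
  | nil => intros; rfl
  | cons c l ih =>
      intro j p h
      show (DistOBP B i u u').walkL (j + 1) ((DistOBP B i u u').next j p c) l = p
      have hstep : (DistOBP B i u u').next j p c = p := by
        simp [DistOBP, Nat.not_lt.2 h]
      rw [hstep, ih (j + 1) p (by omega)]

lemma ofFn_take_bits {N : ℕ} (x : Fin N → Bool) {m : ℕ} (hm : m ≤ N) :
    (List.ofFn x).take m = List.ofFn (bits x m) := by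
  apply List.ext_getElem
  · simp [hm]
  · intro k h1 h2
    have hkm : k < m := by simpa using h2
    have hkN : k < N := lt_of_lt_of_le hkm hm
    simp [List.getElem_take, List.getElem_ofFn, bits, hkN]

lemma Dist_eval {n w : ℕ} (B : OBP n w) {i : ℕ} (hi : i ≤ n) (u u' : Fin w)
    (x : Fin n → Bool) :
    (DistOBP B i u u').eval x =
      (B.label (B.walk (n - i) i u (bits x (n - i)))
        && !B.label (B.walk (n - i) i u' (bits x (n - i)))) := by
  have hmn : n - i ≤ n := Nat.sub_le n i
  show (DistOBP B i u u').label ((DistOBP B i u u').walk n 0 (encE w (u, u')) x) = _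
  rw [OBP.walk_eq_walkL]
  have hsplit : List.ofFn x = List.ofFn (bits x (n - i)) ++ (List.ofFn x).drop (n - i) := by
    conv_lhs => rw [← List.take_append_drop (n - i) (List.ofFn x)]
    rw [ofFn_take_bits x hmn]
  rw [hsplit, OBP.walkL_append]
  rw [Dist_walkL_sim B i u u' _ 0 u u' (by simp)]
  rw [Dist_walkL_stay B i u u' _ _ _ (by simp)]
  show (DistOBP B i u u').label (encE w (B.walkL (i + 0) u _, B.walkL (i + 0) u' _)) = _
  simp only [DistOBP, Equiv.symm_apply_apply, Nat.add_zero]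
  rw [OBP.walk_eq_walkL, OBP.walk_eq_walkL]

set_option maxHeartbeats 1000000 in
lemma key_le {n w s : ℕ} (B : OBP n w) (H : (Fin s → Bool) → Fin n → Bool) {ε : ℝ}
    (hH : IsHSG n (w ^ 2) s H ε) {i : ℕ} (hi : i ≤ n) {u u' : Fin w}
    (hind : Indist B H i u u') : pAcc B i u - pAcc B i u' ≤ ε := by
  by_contra hc
  push_neg at hc
  have hEeq : Exp (fun x : Fin n → Bool => bval ((DistOBP B i u u').eval x)) =
      prob (fun x : Fin n → Bool =>
        B.label (B.walk (n - i) i u (bits x (n - i))) = true ∧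
        ¬ B.label (B.walk (n - i) i u' (bits x (n - i))) = true) := by
    rw [exp_bval_eq_prob]
    apply prob_congr
    intro x
    rw [Dist_eval B hi u u' x]
    simp
  have hu : prob (fun x : Fin n → Bool =>
      B.label (B.walk (n - i) i u (bits x (n - i))) = true) = pAcc B i u := by
    rw [pAcc_eq_of B rfl u]
    exact prob_bits (Nat.sub_le n i) (fun r => B.label (B.walk (n - i) i u r) = true)
  have hu' : prob (fun x : Fin n → Bool =>
      B.label (B.walk (n - i) i u' (bits x (n - i))) = true) = pAcc B i u' := by
    rw [pAcc_eq_of B rfl u']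
    exact prob_bits (Nat.sub_le n i) (fun r => B.label (B.walk (n - i) i u' r) = true)
  have hE : ε ≤ Exp (fun x : Fin n → Bool => bval ((DistOBP B i u u').eval x)) := by
    rw [hEeq]
    have hd := prob_diff (fun x : Fin n → Bool =>
        B.label (B.walk (n - i) i u (bits x (n - i))) = true)
      (fun x : Fin n → Bool =>
        B.label (B.walk (n - i) i u' (bits x (n - i))) = true)
    rw [hu, hu'] at hd
    linarith
  obtain ⟨y, hy⟩ := hH (DistOBP B i u u') hE
  rw [Dist_eval B hi u u' (H y)] at hy
  rw [hind y] at hy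
  simp at hy

lemma Indist.symm' {n w s : ℕ} {B : OBP n w} {H : (Fin s → Bool) → Fin n → Bool}
    {i : ℕ} {u u' : Fin w} (h : Indist B H i u u') : Indist B H i u' u :=
  fun y => (h y).symm

lemma key_abs {n w s : ℕ} (B : OBP n w) (H : (Fin s → Bool) → Fin n → Bool) {ε : ℝ}
    (hH : IsHSG n (w ^ 2) s H ε) {i : ℕ} (hi : i ≤ n) {u u' : Fin w}
    (hind : Indist B H i u u') : |pAcc B i u - pAcc B i u'| ≤ ε :=
  abs_sub_le_iff.2 ⟨key_le B H hH hi hind, key_le B H hH hi hind.symm'⟩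

lemma eps_nonneg {n w s : ℕ} (hw : 0 < w) (H : (Fin s → Bool) → Fin n → Bool) {ε : ℝ}
    (hH : IsHSG n (w ^ 2) s H ε) : 0 ≤ ε := by
  by_contra h
  push_neg at h
  have hpos : 0 < w ^ 2 := pow_pos hw 2
  set D0 : OBP n (w ^ 2) := ⟨⟨0, hpos⟩, fun _ v _ => v, fun _ => false⟩ with hD0
  have hE : ε ≤ Exp (fun x : Fin n → Bool => bval (D0.eval x)) := by
    have hz : Exp (fun x : Fin n → Bool => bval (D0.eval x)) = 0 := by
      simp [Exp, OBP.eval, bval, hD0]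
    rw [hz]; linarith
  obtain ⟨y, hy⟩ := hH D0 hE
  simp [OBP.eval, hD0] at hy

lemma walk_zero_eq {n w : ℕ} (B : OBP n w) {k : ℕ} (h : k = 0) (i : ℕ) (u : Fin w)
    (x : Fin k → Bool) : B.walk k i u x = u := by
  subst h; rfl

lemma vAt_last {n w s : ℕ} (B : OBP n w) (H : (Fin s → Bool) → Fin n → Bool)
    (x : Fin s → Bool) : vAt B H n x = B.reach (H x) := by
  unfold vAt
  rw [bits_self]

lemma indist_last_eq {n w s : ℕ} {B : OBP n w} {H : (Fin s → Bool) → Fin n → Bool}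
    {u u' : Fin w} (h : Indist B H n u u') : u = u' := by
  have hy := h (Classical.arbitrary _)
  rwa [walk_zero_eq B (Nat.sub_self n), walk_zero_eq B (Nat.sub_self n)] at hy

theorem stmt13 {n w s : ℕ} (B : OBP n w) (ε : ℝ)
    (H : (Fin s → Bool) → Fin n → Bool) (hH : IsHSG n (w ^ 2) s H ε)
    (pt : (Fin s → Bool) → ℕ → ℝ)
    (h1 : ∀ (x : Fin s → Bool) (i : ℕ), i < n →
      |pt x i - pAcc B i (vAt B H i x)| ≤ 2 * ε)
    (h2 : ∀ x : Fin s → Bool, pt x n = bval (B.eval (H x))) :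
    (∀ (x x₀ x₁ : Fin s → Bool) (i : ℕ), i < n →
      Indist B H (i + 1) (B.next i (vAt B H i x) false) (vAt B H (i + 1) x₀) →
      Indist B H (i + 1) (B.next i (vAt B H i x) true) (vAt B H (i + 1) x₁) →
      |pt x i - (pt x₀ (i + 1) + pt x₁ (i + 1)) / 2| ≤ 5 * ε) ∧
    (∀ (x x' : Fin s → Bool) (i : ℕ), i ≤ n →
      Indist B H i (vAt B H i x) (vAt B H i x') → |pt x i - pt x' i| ≤ 5 * ε) ∧
    (∀ x : Fin s → Bool, pt x n = bval (B.eval (H x))) := by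
  have hw : 0 < w := Nat.pos_of_ne_zero (fun h => by subst h; exact B.start.elim0)
  have hε : 0 ≤ ε := eps_nonneg hw H hH
  -- extended closeness bound, also valid at i = n
  have hb : ∀ (x : Fin s → Bool) (j : ℕ), j ≤ n →
      |pt x j - pAcc B j (vAt B H j x)| ≤ 2 * ε := by
    intro x j hj
    rcases lt_or_eq_of_le hj with h | h
    · exact h1 x j h
    · subst h
      rw [h2 x, pAcc_last, vAt_last]
      show |bval (B.label (B.reach (H x))) - bval (B.label (B.reach (H x)))| ≤ 2 * ε
      rw [sub_self, abs_zero]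
      linarith
  refine ⟨?_, ?_, h2⟩
  · intro x x₀ x₁ i hi hI0 hI1
    have hrec := pAcc_succ B hi (vAt B H i x)
    have hin : i + 1 ≤ n := hi
    have k0 := key_abs B H hH hin hI0
    have k1 := key_abs B H hH hin hI1
    have a0 := h1 x i hi
    have b0 := hb x₀ (i + 1) hin
    have b1 := hb x₁ (i + 1) hin
    rw [abs_sub_le_iff] at k0 k1 a0 b0 b1 ⊢
    obtain ⟨k0a, k0b⟩ := k0
    obtain ⟨k1a, k1b⟩ := k1
    obtain ⟨a0a, a0b⟩ := a0
    obtain ⟨b0a, b0b⟩ := b0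
    obtain ⟨b1a, b1b⟩ := b1
    constructor <;> linarith
  · intro x x' i hi hind
    rcases lt_or_eq_of_le hi with h | h
    · have t1 := h1 x i h
      have t2 := h1 x' i h
      have t3 := key_abs B H hH hi hind
      rw [abs_sub_le_iff] at t1 t2 t3 ⊢
      obtain ⟨t1a, t1b⟩ := t1
      obtain ⟨t2a, t2b⟩ := t2
      obtain ⟨t3a, t3b⟩ := t3
      constructor <;> linarith
    · subst h
      have heq : vAt B H i x = vAt B H i x' := indist_last_eq hind
      rw [h2 x, h2 x']
      have heval : B.eval (H x) = B.eval (H x') := by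
        show B.label (B.reach (H x)) = B.label (B.reach (H x'))
        rw [← vAt_last B H x, ← vAt_last B H x', heq]
      rw [heval, sub_self, abs_zero]
      linarith
end Helpers
end
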